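/- Let S = R ∪ B be a two-colored finite point set in ℝ² and let H ⊆ R₁ be a finite set of rectangles such that no two elements of H have a piercing intersection or a corner intersection. Then there exists a subset I ⊆ H of pairwise-disjoint rectangles with 2·|I| ≥ |H|. -/

import Mathlib

open Set

/-- Points of the plane. -/
abbrev Pt : Type := ℝ × ℝ

/-- `D a b` is the closed axis-aligned rectangle having the segment from `a` to `b`
as a diagonal, i.e. the minimum enclosing axis-aligned rectangle of `a` and `b`. -/
def D (a b : Pt) : Set Pt :=
  Set.Icc (min a.1 b.1) (max a.1 b.1) ×ˢ Set.Icc (min a.2 b.2) (max a.2 b.2)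

/-- `Pierces R₂ R₁` : the projection of `R₁` onto the x-axis contains that of `R₂`,
and the projection of `R₂` onto the y-axis contains that of `R₁`. -/
def Pierces (R₂ R₁ : Set Pt) : Prop :=
  Prod.fst '' R₂ ⊆ Prod.fst '' R₁ ∧ Prod.snd '' R₁ ⊆ Prod.snd '' R₂

/-- Two rectangles have a piercing intersection if one of them pierces the other. -/
def PiercingInter (A B : Set Pt) : Prop := Pierces A B ∨ Pierces B A

/-- The four corner points of an axis-aligned rectangle given as a set. -/
def corners (A : Set Pt) : Set Pt :=
  {c | (c.1 = sInf (Prod.fst '' A) ∨ c.1 = sSup (Prod.fst '' A)) ∧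
       (c.2 = sInf (Prod.snd '' A) ∨ c.2 = sSup (Prod.snd '' A))}

/-- `A` and `B` have a corner intersection (w.r.t. the point set `P`):
each rectangle contains exactly one of the corner points of the other,
and these two contained corners are not elements of `P`. -/
def CornerInter (P : Set Pt) (A B : Set Pt) : Prop :=
  (∃! c, c ∈ corners B ∧ c ∈ A) ∧ (∃! c, c ∈ corners A ∧ c ∈ B) ∧
  ∀ c, ((c ∈ corners B ∧ c ∈ A) ∨ (c ∈ corners A ∧ c ∈ B)) → c ∉ P

/-- `A` and `B` have a point intersection: their intersection is precisely
a single point of `P`. -/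
def PointInter (P : Set Pt) (A B : Set Pt) : Prop := ∃ s ∈ P, A ∩ B = {s}

/-- `A` is a rectangle on the point set `P`. -/
def IsRectOn (P : Set Pt) (A : Set Pt) : Prop :=
  ∃ a b, a ∈ P ∧ b ∈ P ∧ a ≠ b ∧ A = D a b ∧ A ∩ P = {a, b}

/-- A complete set of rectangles on `P`: for every two elements `D a b`, `D a' b'`
of `H` that have a corner intersection, the other two rectangles of the form
`D p q` (with `p ∈ {a,a'}`, `q ∈ {b,b'}`) having a piercing intersection with
each other also belong to `H`. -/
def CompleteOn (P : Set Pt) (H : Set (Set Pt)) : Prop :=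
  (∀ A ∈ H, IsRectOn P A) ∧
  ∀ a b a' b' : Pt, a ∈ P → b ∈ P → a' ∈ P → b' ∈ P →
    D a b ∈ H → D a' b' ∈ H → CornerInter P (D a b) (D a' b') →
    PiercingInter (D a b') (D a' b) →
    D a b' ∈ H ∧ D a' b ∈ H

/-- Adjacency in the graph `G_{p,c}(H)` : a piercing or a corner intersection. -/
def AdjPC (P : Set Pt) (A B : Set Pt) : Prop := PiercingInter A B ∨ CornerInter P A B

/-- `I` is an independent set of the graph `G_{p,c}(H)`. -/
def IndepPC (P : Set Pt) (H I : Set (Set Pt)) : Prop :=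
  I ⊆ H ∧ I.Pairwise fun A B => ¬ AdjPC P A B

/-- The maximum size of an independent set of the graph `G_{p,c}(H)`. -/
noncomputable def maxIndepPC (P : Set Pt) (H : Set (Set Pt)) : ℕ :=
  sSup {n | ∃ I, IndepPC P H I ∧ I.ncard = n}

/-- The family `𝓡(S)` of monochromatic rectangles of the two-colored point set
`S = R ∪ B`: rectangles `D p q` with `p,q` distinct points of the same color
containing no point of `S` other than `p` and `q`. -/
def RS (R B : Set Pt) : Set (Set Pt) :=
  {A | ∃ p q, ((p ∈ R ∧ q ∈ R) ∨ (p ∈ B ∧ q ∈ B)) ∧ p ≠ q ∧ A = D p q ∧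
    A ∩ (R ∪ B) = {p, q}}

/-- The blue rectangles of `𝓡(S)` having a point of `S` at their bottom-left corner. -/
def Fam1Blue (R B : Set Pt) : Set (Set Pt) :=
  {A | ∃ p q, p ∈ B ∧ q ∈ B ∧ p ≠ q ∧ A = D p q ∧ A ∩ (R ∪ B) = {p, q} ∧
    (min p.1 q.1, min p.2 q.2) ∈ R ∪ B}

/-- The red rectangles of `𝓡(S)` having a point of `S` at their bottom-right corner. -/
def Fam1Red (R B : Set Pt) : Set (Set Pt) :=
  {A | ∃ p q, p ∈ R ∧ q ∈ R ∧ p ≠ q ∧ A = D p q ∧ A ∩ (R ∪ B) = {p, q} ∧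
    (max p.1 q.1, min p.2 q.2) ∈ R ∪ B}

/-- The family `𝓡₁`. -/
def Fam1 (R B : Set Pt) : Set (Set Pt) := Fam1Blue R B ∪ Fam1Red R B

/-- The family `𝓡₂`: blue rectangles with a point of `S` at the bottom-right corner
together with red rectangles with a point of `S` at the bottom-left corner. -/
def Fam2 (R B : Set Pt) : Set (Set Pt) :=
  {A | ∃ p q, p ∈ B ∧ q ∈ B ∧ p ≠ q ∧ A = D p q ∧ A ∩ (R ∪ B) = {p, q} ∧
    (max p.1 q.1, min p.2 q.2) ∈ R ∪ B} ∪
  {A | ∃ p q, p ∈ R ∧ q ∈ R ∧ p ≠ q ∧ A = D p q ∧ A ∩ (R ∪ B) = {p, q} ∧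
    (min p.1 q.1, min p.2 q.2) ∈ R ∪ B}

/-- The maximum size of a subfamily of `H` consisting of pairwise-disjoint rectangles. -/
noncomputable def maxDisjoint (H : Set (Set Pt)) : ℕ :=
  sSup {n | ∃ I ⊆ H, I.Pairwise (fun A B => A ∩ B = ∅) ∧ I.ncard = n}

section Aux
variable {Rs Bs : Set Pt}

def Rect (a b c d : ℝ) : Set Pt := Set.Icc a b ×ˢ Set.Icc c d

lemma mem_Rect {a b c d : ℝ} {z : Pt} :
    z ∈ Rect a b c d ↔ (a ≤ z.1 ∧ z.1 ≤ b) ∧ (c ≤ z.2 ∧ z.2 ≤ d) := by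
  simp [Rect, Set.mem_prod, Set.mem_Icc, Prod.le_def]; tauto

lemma rect_cases {a b c d : ℝ} {z : Pt} (h : z ∉ Rect a b c d) :
    z.1 < a ∨ b < z.1 ∨ z.2 < c ∨ d < z.2 := by
  rw [mem_Rect] at h; push_neg at h
  by_contra hc; push_neg at hc
  obtain ⟨h1, h2, h3, h4⟩ := hc
  exact absurd (h ⟨h1, h2⟩ h3) (by simpa using h4)

lemma fst_Rect {a b c d : ℝ} (h : c ≤ d) : Prod.fst '' Rect a b c d = Set.Icc a b := by
  rw [Rect, Set.fst_image_prod]; exact Set.nonempty_Icc.2 h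

lemma snd_Rect {a b c d : ℝ} (h : a ≤ b) : Prod.snd '' Rect a b c d = Set.Icc c d := by
  rw [Rect, Set.snd_image_prod]; exact Set.nonempty_Icc.2 h

lemma pierces_rect {a b c d a' b' c' d' : ℝ} (hab : a ≤ b) (hcd : c ≤ d)
    (hab' : a' ≤ b') (hcd' : c' ≤ d')
    (h1 : a' ≤ a) (h2 : b ≤ b') (h3 : c ≤ c') (h4 : d' ≤ d) :
    Pierces (Rect a b c d) (Rect a' b' c' d') := by
  constructor
  · rw [fst_Rect hcd, fst_Rect hcd']; exact Set.Icc_subset_Icc h1 h2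
  · rw [snd_Rect hab', snd_Rect hab]; exact Set.Icc_subset_Icc h3 h4

lemma corners_rect {a b c d : ℝ} (hab : a ≤ b) (hcd : c ≤ d) :
    corners (Rect a b c d) = {z : Pt | (z.1 = a ∨ z.1 = b) ∧ (z.2 = c ∨ z.2 = d)} := by
  unfold corners
  rw [fst_Rect hcd, snd_Rect hab, csInf_Icc hab, csSup_Icc hab, csInf_Icc hcd, csSup_Icc hcd]

lemma piercingInter_symm {A B : Set Pt} (h : PiercingInter A B) : PiercingInter B A :=
  h.symm

lemma cornerInter_symm {S A B : Set Pt} (h : CornerInter S A B) : CornerInter S B A :=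
  ⟨h.2.1, h.1, fun c hc => h.2.2 c (Or.symm hc)⟩

end Aux
def BlueData (Rs Bs : Set Pt) (A : Set Pt) (u v : Pt) : Prop :=
  u ∈ Bs ∧ v ∈ Bs ∧ u ≠ v ∧ u.1 ≤ v.1 ∧ u.2 ≤ v.2 ∧
  A = Rect u.1 v.1 u.2 v.2 ∧ A ∩ (Rs ∪ Bs) = {u, v}

def RedData (Rs Bs : Set Pt) (A : Set Pt) (u v : Pt) : Prop :=
  u ∈ Rs ∧ v ∈ Rs ∧ u ≠ v ∧ u.1 ≤ v.1 ∧ v.2 ≤ u.2 ∧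
  A = Rect u.1 v.1 v.2 u.2 ∧ A ∩ (Rs ∪ Bs) = {u, v}

lemma D_eq_rect (p q : Pt) :
    D p q = Rect (min p.1 q.1) (max p.1 q.1) (min p.2 q.2) (max p.2 q.2) := rfl

lemma fam1_data {Rs Bs : Set Pt} {A : Set Pt} (h : A ∈ Fam1 Rs Bs) :
    (∃ u v, BlueData Rs Bs A u v) ∨ (∃ u v, RedData Rs Bs A u v) := by
  rcases h with h | h
  · left
    obtain ⟨p, q, hp, hq, hpq, hA, hS, hbl⟩ := h
    have hblA : ((min p.1 q.1, min p.2 q.2) : Pt) ∈ A := by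
      rw [hA, D_eq_rect, mem_Rect]
      constructor
      · exact ⟨le_refl _, min_le_max⟩
      · exact ⟨le_refl _, min_le_max⟩
    have : ((min p.1 q.1, min p.2 q.2) : Pt) ∈ ({p, q} : Set Pt) := by
      rw [← hS]; exact ⟨hblA, hbl⟩
    rcases this with h' | h'
    · have h1 : min p.1 q.1 = p.1 := congrArg Prod.fst h'
      have h2 : min p.2 q.2 = p.2 := congrArg Prod.snd h'
      have hle1 : p.1 ≤ q.1 := by rw [← h1]; exact min_le_right _ _
      have hle2 : p.2 ≤ q.2 := by rw [← h2]; exact min_le_right _ _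
      refine ⟨p, q, hp, hq, hpq, hle1, hle2, ?_, hS⟩
      rw [hA, D_eq_rect, min_eq_left hle1, max_eq_right hle1, min_eq_left hle2,
        max_eq_right hle2]
    · have h1 : min p.1 q.1 = q.1 := congrArg Prod.fst h'
      have h2 : min p.2 q.2 = q.2 := congrArg Prod.snd h'
      have hle1 : q.1 ≤ p.1 := by rw [← h1]; exact min_le_left _ _
      have hle2 : q.2 ≤ p.2 := by rw [← h2]; exact min_le_left _ _
      refine ⟨q, p, hq, hp, hpq.symm, hle1, hle2, ?_, by rw [hS]; exact Set.pair_comm p q⟩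
      rw [hA, D_eq_rect, min_eq_right hle1, max_eq_left hle1, min_eq_right hle2,
        max_eq_left hle2]
  · right
    obtain ⟨p, q, hp, hq, hpq, hA, hS, hbr⟩ := h
    have hbrA : ((max p.1 q.1, min p.2 q.2) : Pt) ∈ A := by
      rw [hA, D_eq_rect, mem_Rect]
      exact ⟨⟨min_le_max, le_refl _⟩, ⟨le_refl _, min_le_max⟩⟩
    have : ((max p.1 q.1, min p.2 q.2) : Pt) ∈ ({p, q} : Set Pt) := by
      rw [← hS]; exact ⟨hbrA, hbr⟩
    rcases this with h' | h'
    · -- p is the bottom-right corner, so u := q (top-left), v := p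
      have h1 : max p.1 q.1 = p.1 := congrArg Prod.fst h'
      have h2 : min p.2 q.2 = p.2 := congrArg Prod.snd h'
      have hle1 : q.1 ≤ p.1 := by rw [← h1]; exact le_max_right _ _
      have hle2 : p.2 ≤ q.2 := by rw [← h2]; exact min_le_right _ _
      refine ⟨q, p, hq, hp, hpq.symm, hle1, hle2, ?_, by rw [hS]; exact Set.pair_comm p q⟩
      rw [hA, D_eq_rect, min_eq_right hle1, max_eq_left hle1, min_eq_left hle2,
        max_eq_right hle2]
    · have h1 : max p.1 q.1 = q.1 := congrArg Prod.fst h'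
      have h2 : min p.2 q.2 = q.2 := congrArg Prod.snd h'
      have hle1 : p.1 ≤ q.1 := by rw [← h1]; exact le_max_left _ _
      have hle2 : q.2 ≤ p.2 := by rw [← h2]; exact min_le_left _ _
      refine ⟨p, q, hp, hq, hpq, hle1, hle2, ?_, hS⟩
      rw [hA, D_eq_rect, min_eq_left hle1, max_eq_right hle1, min_eq_right hle2,
        max_eq_left hle2]
section SharedPierce
variable {s1 s2 : ℝ}

/-- shared bottom-left corner (s1,s2) -/
lemma pierce_ll {b d b' d' : ℝ} (hb : s1 ≤ b) (hd : s2 ≤ d) (hb' : s1 ≤ b') (hd' : s2 ≤ d')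
    (e1 : b' < b ∨ d' < d) (e2 : b < b' ∨ d < d') :
    PiercingInter (Rect s1 b s2 d) (Rect s1 b' s2 d') := by
  rcases e1 with e1 | e1 <;> rcases e2 with e2 | e2
  · exact absurd e1 (by linarith)
  · exact Or.inr (pierces_rect hb' hd' hb hd le_rfl e1.le le_rfl e2.le)
  · exact Or.inl (pierces_rect hb hd hb' hd' le_rfl e2.le le_rfl e1.le)
  · exact absurd e1 (by linarith)

/-- shared top-right corner (s1,s2) -/
lemma pierce_hh {a c a' c' : ℝ} (ha : a ≤ s1) (hc : c ≤ s2) (ha' : a' ≤ s1) (hc' : c' ≤ s2)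
    (e1 : a < a' ∨ c < c') (e2 : a' < a ∨ c' < c) :
    PiercingInter (Rect a s1 c s2) (Rect a' s1 c' s2) := by
  rcases e1 with e1 | e1 <;> rcases e2 with e2 | e2
  · exact absurd e1 (by linarith)
  · exact Or.inr (pierces_rect ha' hc' ha hc e1.le le_rfl e2.le le_rfl)
  · exact Or.inl (pierces_rect ha hc ha' hc' e2.le le_rfl e1.le le_rfl)
  · exact absurd e1 (by linarith)

/-- shared top-left corner (s1,s2) -/
lemma pierce_lh {b c b' c' : ℝ} (hb : s1 ≤ b) (hc : c ≤ s2) (hb' : s1 ≤ b') (hc' : c' ≤ s2)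
    (e1 : b' < b ∨ c < c') (e2 : b < b' ∨ c' < c) :
    PiercingInter (Rect s1 b c s2) (Rect s1 b' c' s2) := by
  rcases e1 with e1 | e1 <;> rcases e2 with e2 | e2
  · exact absurd e1 (by linarith)
  · exact Or.inr (pierces_rect hb' hc' hb hc le_rfl e1.le e2.le le_rfl)
  · exact Or.inl (pierces_rect hb hc hb' hc' le_rfl e2.le e1.le le_rfl)
  · exact absurd e1 (by linarith)

/-- shared bottom-right corner (s1,s2) -/
lemma pierce_hl {a d a' d' : ℝ} (ha : a ≤ s1) (hd : s2 ≤ d) (ha' : a' ≤ s1) (hd' : s2 ≤ d')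
    (e1 : a < a' ∨ d' < d) (e2 : a' < a ∨ d < d') :
    PiercingInter (Rect a s1 s2 d) (Rect a' s1 s2 d') := by
  rcases e1 with e1 | e1 <;> rcases e2 with e2 | e2
  · exact absurd e1 (by linarith)
  · exact Or.inr (pierces_rect ha' hd' ha hd e1.le le_rfl le_rfl e2.le)
  · exact Or.inl (pierces_rect ha hd ha' hd' e2.le le_rfl le_rfl e1.le)
  · exact absurd e1 (by linarith)

end SharedPierce
section NestedPierce

lemma nested_pierce {x1 x2 y1 y2 x1' x2' y1' y2' : ℝ} {P Q : Pt}
    (hx : x1 ≤ x2) (hy : y1 ≤ y2) (hx' : x1' ≤ x2') (hy' : y1' ≤ y2')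
    (hP1 : P.1 = x1) (hQ1 : Q.1 = x2)
    (hPQ2 : (P.2 = y1 ∧ Q.2 = y2) ∨ (P.2 = y2 ∧ Q.2 = y1))
    (hPn : P ∉ Rect x1' x2' y1' y2') (hQn : Q ∉ Rect x1' x2' y1' y2')
    (hn1 : x1' ≤ x1) (hn2 : x2 ≤ x2') (hb1 : y1 ≤ y2') (hb2 : y1' ≤ y2) :
    PiercingInter (Rect x1 x2 y1 y2) (Rect x1' x2' y1' y2') := by
  have eP := rect_cases hPn
  have eQ := rect_cases hQn
  rw [hP1] at eP; rw [hQ1] at eQ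
  have hP2 : P.2 < y1' ∨ y2' < P.2 := by
    rcases eP with h | h | h | h
    · exact absurd h (by linarith)
    · exact absurd h (by linarith)
    · exact Or.inl h
    · exact Or.inr h
  have hQ2 : Q.2 < y1' ∨ y2' < Q.2 := by
    rcases eQ with h | h | h | h
    · exact absurd h (by linarith)
    · exact absurd h (by linarith)
    · exact Or.inl h
    · exact Or.inr h
  have hy1n : y1 < y1' ∨ y2' < y1 := by
    rcases hPQ2 with ⟨h1, _⟩ | ⟨_, h2⟩
    · rw [h1] at hP2; exact hP2
    · rw [h2] at hQ2; exact hQ2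
  have hy2n : y2 < y1' ∨ y2' < y2 := by
    rcases hPQ2 with ⟨_, h2⟩ | ⟨h1, _⟩
    · rw [h2] at hQ2; exact hQ2
    · rw [h1] at hP2; exact hP2
  have k1 : y1 < y1' := by
    rcases hy1n with h | h
    · exact h
    · exact absurd h (by linarith)
  have k2 : y2' < y2 := by
    rcases hy2n with h | h
    · exact absurd h (by linarith)
    · exact h
  exact Or.inl (pierces_rect hx hy hx' hy' hn1 hn2 k1.le k2.le)

lemma nested_pierce_y {x1 x2 y1 y2 x1' x2' y1' y2' : ℝ} {P Q : Pt}
    (hx : x1 ≤ x2) (hy : y1 ≤ y2) (hx' : x1' ≤ x2') (hy' : y1' ≤ y2')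
    (hP1 : P.1 = x1) (hQ1 : Q.1 = x2)
    (hPQ2 : (P.2 = y1 ∧ Q.2 = y2) ∨ (P.2 = y2 ∧ Q.2 = y1))
    (hPn : P ∉ Rect x1' x2' y1' y2') (hQn : Q ∉ Rect x1' x2' y1' y2')
    (hn1 : y1' ≤ y1) (hn2 : y2 ≤ y2') (hb1 : x1 ≤ x2') (hb2 : x1' ≤ x2) :
    PiercingInter (Rect x1 x2 y1 y2) (Rect x1' x2' y1' y2') := by
  have hP2a : y1' ≤ P.2 := by rcases hPQ2 with ⟨h1, _⟩ | ⟨h1, _⟩ <;> rw [h1] <;> linarith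
  have hP2b : P.2 ≤ y2' := by rcases hPQ2 with ⟨h1, _⟩ | ⟨h1, _⟩ <;> rw [h1] <;> linarith
  have hQ2a : y1' ≤ Q.2 := by rcases hPQ2 with ⟨_, h2⟩ | ⟨_, h2⟩ <;> rw [h2] <;> linarith
  have hQ2b : Q.2 ≤ y2' := by rcases hPQ2 with ⟨_, h2⟩ | ⟨_, h2⟩ <;> rw [h2] <;> linarith
  have eP := rect_cases hPn
  have eQ := rect_cases hQn
  rw [hP1] at eP; rw [hQ1] at eQ
  have k1 : x1 < x1' := by
    rcases eP with h | h | h | h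
    · exact h
    · exact absurd h (by linarith)
    · exact absurd h (by linarith)
    · exact absurd h (by linarith)
  have k2 : x2' < x2 := by
    rcases eQ with h | h | h | h
    · exact absurd h (by linarith)
    · exact h
    · exact absurd h (by linarith)
    · exact absurd h (by linarith)
  exact Or.inr (pierces_rect hx' hy' hx hy k1.le k2.le hn1 hn2)

end NestedPierce
section CornerBuild

lemma corner_build {x1 x2 y1 y2 x1' x2' y1' y2' : ℝ} {S : Set Pt} {P Q P' Q' : Pt}
    (ha : x1 < x1') (hb : x1' ≤ x2) (hc : x2 < x2')
    (hd : y1 < y1') (he : y1' ≤ y2) (hf : y2 < y2')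
    (hSA : Rect x1 x2 y1 y2 ∩ S ⊆ {P, Q}) (hSA' : Rect x1' x2' y1' y2' ∩ S ⊆ {P', Q'})
    (hPn : P ∉ Rect x1' x2' y1' y2') (hQn : Q ∉ Rect x1' x2' y1' y2')
    (hPn' : P' ∉ Rect x1 x2 y1 y2) (hQn' : Q' ∉ Rect x1 x2 y1 y2) :
    CornerInter S (Rect x1 x2 y1 y2) (Rect x1' x2' y1' y2') := by
  have hx : x1 ≤ x2 := by linarith
  have hy : y1 ≤ y2 := by linarith
  have hx' : x1' ≤ x2' := by linarith
  have hy' : y1' ≤ y2' := by linarith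
  have hcA := corners_rect hx hy
  have hcA' := corners_rect hx' hy'
  have hwA' : ((x1', y1') : Pt) ∈ Rect x1 x2 y1 y2 := mem_Rect.2 ⟨⟨ha.le, hb⟩, ⟨hd.le, he⟩⟩
  have hwA : ((x2, y2) : Pt) ∈ Rect x1' x2' y1' y2' := mem_Rect.2 ⟨⟨hb, hc.le⟩, ⟨he, hf.le⟩⟩
  have huniq1 : ∀ c : Pt, c ∈ corners (Rect x1' x2' y1' y2') ∧ c ∈ Rect x1 x2 y1 y2 →
      c = ((x1', y1') : Pt) := by
    intro c ⟨hc1, hc2⟩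
    rw [hcA'] at hc1
    rw [mem_Rect] at hc2
    obtain ⟨h1 | h1, h2 | h2⟩ := hc1
    · exact Prod.ext_iff.2 ⟨h1, h2⟩
    · exact absurd hc2.2.2 (by rw [h2]; push_neg; linarith)
    · exact absurd hc2.1.2 (by rw [h1]; push_neg; linarith)
    · exact absurd hc2.1.2 (by rw [h1]; push_neg; linarith)
  have huniq2 : ∀ c : Pt, c ∈ corners (Rect x1 x2 y1 y2) ∧ c ∈ Rect x1' x2' y1' y2' →
      c = ((x2, y2) : Pt) := by
    intro c ⟨hc1, hc2⟩
    rw [hcA] at hc1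
    rw [mem_Rect] at hc2
    obtain ⟨h1 | h1, h2 | h2⟩ := hc1
    · exact absurd hc2.1.1 (by rw [h1]; push_neg; linarith)
    · exact absurd hc2.2.1 (by rw [h2]; push_neg; linarith)
    · exact absurd hc2.1.1 (by rw [h1]; push_neg; linarith)
    · exact Prod.ext_iff.2 ⟨h1, h2⟩
  refine ⟨⟨(x1', y1'), ⟨?_, hwA'⟩, huniq1⟩, ⟨(x2, y2), ⟨?_, hwA⟩, huniq2⟩, ?_⟩
  · rw [hcA']; exact ⟨Or.inl rfl, Or.inl rfl⟩
  · rw [hcA]; exact ⟨Or.inr rfl, Or.inr rfl⟩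
  · intro c hcc hcS
    rcases hcc with ⟨hc1, hc2⟩ | ⟨hc1, hc2⟩
    · have hcp := huniq1 c ⟨hc1, hc2⟩
      have hcA'mem : c ∈ Rect x1' x2' y1' y2' := by
        rw [hcp]; exact mem_Rect.2 ⟨⟨le_rfl, hx'⟩, ⟨le_rfl, hy'⟩⟩
      rcases hSA ⟨hc2, hcS⟩ with rfl | rfl
      · exact hPn hcA'mem
      · exact hQn hcA'mem
    · have hcp := huniq2 c ⟨hc1, hc2⟩
      have hcAmem : c ∈ Rect x1 x2 y1 y2 := by
        rw [hcp]; exact mem_Rect.2 ⟨⟨hx, le_rfl⟩, ⟨hy, le_rfl⟩⟩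
      rcases hSA' ⟨hc2, hcS⟩ with rfl | rfl
      · exact hPn' hcAmem
      · exact hQn' hcAmem

lemma corner_build2 {x1 x2 y1 y2 x1' x2' y1' y2' : ℝ} {S : Set Pt} {P Q P' Q' : Pt}
    (ha : x1 < x1') (hb : x1' ≤ x2) (hc : x2 < x2')
    (hd : y1' < y1) (he : y1 ≤ y2') (hf : y2' < y2)
    (hSA : Rect x1 x2 y1 y2 ∩ S ⊆ {P, Q}) (hSA' : Rect x1' x2' y1' y2' ∩ S ⊆ {P', Q'})
    (hPn : P ∉ Rect x1' x2' y1' y2') (hQn : Q ∉ Rect x1' x2' y1' y2')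
    (hPn' : P' ∉ Rect x1 x2 y1 y2) (hQn' : Q' ∉ Rect x1 x2 y1 y2) :
    CornerInter S (Rect x1 x2 y1 y2) (Rect x1' x2' y1' y2') := by
  have hx : x1 ≤ x2 := by linarith
  have hy : y1 ≤ y2 := by linarith
  have hx' : x1' ≤ x2' := by linarith
  have hy' : y1' ≤ y2' := by linarith
  have hcA := corners_rect hx hy
  have hcA' := corners_rect hx' hy'
  have hwA' : ((x1', y2') : Pt) ∈ Rect x1 x2 y1 y2 := mem_Rect.2 ⟨⟨ha.le, hb⟩, ⟨he, hf.le⟩⟩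
  have hwA : ((x2, y1) : Pt) ∈ Rect x1' x2' y1' y2' := mem_Rect.2 ⟨⟨hb, hc.le⟩, ⟨hd.le, he⟩⟩
  have huniq1 : ∀ c : Pt, c ∈ corners (Rect x1' x2' y1' y2') ∧ c ∈ Rect x1 x2 y1 y2 →
      c = ((x1', y2') : Pt) := by
    intro c ⟨hc1, hc2⟩
    rw [hcA'] at hc1
    rw [mem_Rect] at hc2
    obtain ⟨h1 | h1, h2 | h2⟩ := hc1
    · exact absurd hc2.2.1 (by rw [h2]; push_neg; linarith)
    · exact Prod.ext_iff.2 ⟨h1, h2⟩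
    · exact absurd hc2.1.2 (by rw [h1]; push_neg; linarith)
    · exact absurd hc2.1.2 (by rw [h1]; push_neg; linarith)
  have huniq2 : ∀ c : Pt, c ∈ corners (Rect x1 x2 y1 y2) ∧ c ∈ Rect x1' x2' y1' y2' →
      c = ((x2, y1) : Pt) := by
    intro c ⟨hc1, hc2⟩
    rw [hcA] at hc1
    rw [mem_Rect] at hc2
    obtain ⟨h1 | h1, h2 | h2⟩ := hc1
    · exact absurd hc2.1.1 (by rw [h1]; push_neg; linarith)
    · exact absurd hc2.1.1 (by rw [h1]; push_neg; linarith)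
    · exact Prod.ext_iff.2 ⟨h1, h2⟩
    · exact absurd hc2.2.2 (by rw [h2]; push_neg; linarith)
  refine ⟨⟨(x1', y2'), ⟨?_, hwA'⟩, huniq1⟩, ⟨(x2, y1), ⟨?_, hwA⟩, huniq2⟩, ?_⟩
  · rw [hcA']; exact ⟨Or.inl rfl, Or.inr rfl⟩
  · rw [hcA]; exact ⟨Or.inr rfl, Or.inl rfl⟩
  · intro c hcc hcS
    rcases hcc with ⟨hc1, hc2⟩ | ⟨hc1, hc2⟩
    · have hcp := huniq1 c ⟨hc1, hc2⟩
      have hcA'mem : c ∈ Rect x1' x2' y1' y2' := by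
        rw [hcp]; exact mem_Rect.2 ⟨⟨le_rfl, hx'⟩, ⟨hy', le_rfl⟩⟩
      rcases hSA ⟨hc2, hcS⟩ with rfl | rfl
      · exact hPn hcA'mem
      · exact hQn hcA'mem
    · have hcp := huniq2 c ⟨hc1, hc2⟩
      have hcAmem : c ∈ Rect x1 x2 y1 y2 := by
        rw [hcp]; exact mem_Rect.2 ⟨⟨hx, le_rfl⟩, ⟨le_rfl, hy⟩⟩
      rcases hSA' ⟨hc2, hcS⟩ with rfl | rfl
      · exact hPn' hcAmem
      · exact hQn' hcAmem

end CornerBuild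
lemma noshare {x1 x2 y1 y2 x1' x2' y1' y2' : ℝ} {P Q P' Q' : Pt} {S : Set Pt}
    (hx : x1 ≤ x2) (hy : y1 ≤ y2) (hx' : x1' ≤ x2') (hy' : y1' ≤ y2')
    (hP1 : P.1 = x1) (hQ1 : Q.1 = x2)
    (hPQ2 : (P.2 = y1 ∧ Q.2 = y2) ∨ (P.2 = y2 ∧ Q.2 = y1))
    (hP1' : P'.1 = x1') (hQ1' : Q'.1 = x2')
    (hPQ2' : (P'.2 = y1' ∧ Q'.2 = y2') ∨ (P'.2 = y2' ∧ Q'.2 = y1'))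
    (hSA : Rect x1 x2 y1 y2 ∩ S ⊆ {P, Q}) (hSA' : Rect x1' x2' y1' y2' ∩ S ⊆ {P', Q'})
    (hPn : P ∉ Rect x1' x2' y1' y2') (hQn : Q ∉ Rect x1' x2' y1' y2')
    (hPn' : P' ∉ Rect x1 x2 y1 y2) (hQn' : Q' ∉ Rect x1 x2 y1 y2)
    (hint : (Rect x1 x2 y1 y2 ∩ Rect x1' x2' y1' y2').Nonempty)
    (hnp : ¬ PiercingInter (Rect x1 x2 y1 y2) (Rect x1' x2' y1' y2'))
    (hnc : ¬ CornerInter S (Rect x1 x2 y1 y2) (Rect x1' x2' y1' y2')) : False := by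
  obtain ⟨z, hz, hz'⟩ := hint
  rw [mem_Rect] at hz hz'
  have hb1 : x1 ≤ x2' := le_trans hz.1.1 hz'.1.2
  have hb2 : x1' ≤ x2 := le_trans hz'.1.1 hz.1.2
  have hb3 : y1 ≤ y2' := le_trans hz.2.1 hz'.2.2
  have hb4 : y1' ≤ y2 := le_trans hz'.2.1 hz.2.2
  -- x-interval analysis
  have hxcase : (x1' ≤ x1 ∧ x2 ≤ x2') ∨ (x1 ≤ x1' ∧ x2' ≤ x2) ∨
      (x1 < x1' ∧ x2 < x2') ∨ (x1' < x1 ∧ x2' < x2) := by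
    rcases le_or_gt x1' x1 with h1 | h1
    · rcases le_or_gt x2 x2' with h2 | h2
      · exact Or.inl ⟨h1, h2⟩
      · rcases eq_or_lt_of_le h1 with h1e | h1s
        · exact Or.inr (Or.inl ⟨le_of_eq h1e.symm, h2.le⟩)
        · exact Or.inr (Or.inr (Or.inr ⟨h1s, h2⟩))
    · rcases le_or_gt x2' x2 with h2 | h2
      · exact Or.inr (Or.inl ⟨h1.le, h2⟩)
      · exact Or.inr (Or.inr (Or.inl ⟨h1, h2⟩))
  rcases hxcase with ⟨h1, h2⟩ | ⟨h1, h2⟩ | ⟨h1, h2⟩ | ⟨h1, h2⟩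
  · exact hnp (nested_pierce hx hy hx' hy' hP1 hQ1 hPQ2 hPn hQn h1 h2 hb3 hb4)
  · have := nested_pierce hx' hy' hx hy hP1' hQ1' hPQ2' hPn' hQn' h1 h2 hb4 hb3
    exact hnp this.symm
  · -- x overlap to the right; now y
    have hycase : (y1' ≤ y1 ∧ y2 ≤ y2') ∨ (y1 ≤ y1' ∧ y2' ≤ y2) ∨
        (y1 < y1' ∧ y2 < y2') ∨ (y1' < y1 ∧ y2' < y2) := by
      rcases le_or_gt y1' y1 with k1 | k1
      · rcases le_or_gt y2 y2' with k2 | k2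
        · exact Or.inl ⟨k1, k2⟩
        · rcases eq_or_lt_of_le k1 with k1e | k1s
          · exact Or.inr (Or.inl ⟨le_of_eq k1e.symm, k2.le⟩)
          · exact Or.inr (Or.inr (Or.inr ⟨k1s, k2⟩))
      · rcases le_or_gt y2' y2 with k2 | k2
        · exact Or.inr (Or.inl ⟨k1.le, k2⟩)
        · exact Or.inr (Or.inr (Or.inl ⟨k1, k2⟩))
    rcases hycase with ⟨k1, k2⟩ | ⟨k1, k2⟩ | ⟨k1, k2⟩ | ⟨k1, k2⟩
    · exact hnp (nested_pierce_y hx hy hx' hy' hP1 hQ1 hPQ2 hPn hQn k1 k2 hb1 hb2)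
    · have := nested_pierce_y hx' hy' hx hy hP1' hQ1' hPQ2' hPn' hQn' k1 k2 hb2 hb1
      exact hnp this.symm
    · exact hnc (corner_build h1 hb2 h2 k1 hb4 k2 hSA hSA' hPn hQn hPn' hQn')
    · exact hnc (corner_build2 h1 hb2 h2 k1 hb3 k2 hSA hSA' hPn hQn hPn' hQn')
  · -- x overlap to the left
    have hycase : (y1' ≤ y1 ∧ y2 ≤ y2') ∨ (y1 ≤ y1' ∧ y2' ≤ y2) ∨
        (y1 < y1' ∧ y2 < y2') ∨ (y1' < y1 ∧ y2' < y2) := by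
      rcases le_or_gt y1' y1 with k1 | k1
      · rcases le_or_gt y2 y2' with k2 | k2
        · exact Or.inl ⟨k1, k2⟩
        · rcases eq_or_lt_of_le k1 with k1e | k1s
          · exact Or.inr (Or.inl ⟨le_of_eq k1e.symm, k2.le⟩)
          · exact Or.inr (Or.inr (Or.inr ⟨k1s, k2⟩))
      · rcases le_or_gt y2' y2 with k2 | k2
        · exact Or.inr (Or.inl ⟨k1.le, k2⟩)
        · exact Or.inr (Or.inr (Or.inl ⟨k1, k2⟩))
    rcases hycase with ⟨k1, k2⟩ | ⟨k1, k2⟩ | ⟨k1, k2⟩ | ⟨k1, k2⟩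
    · exact hnp (nested_pierce_y hx hy hx' hy' hP1 hQ1 hPQ2 hPn hQn k1 k2 hb1 hb2)
    · have := nested_pierce_y hx' hy' hx hy hP1' hQ1' hPQ2' hPn' hQn' k1 k2 hb2 hb1
      exact hnp this.symm
    · exact hnc (cornerInter_symm
        (corner_build2 h1 hb1 h2 k1 hb4 k2 hSA' hSA hPn' hQn' hPn hQn))
    · exact hnc (cornerInter_symm
        (corner_build h1 hb1 h2 k1 hb3 k2 hSA' hSA hPn' hQn' hPn hQn))
lemma classify {Rs Bs : Set Pt} (hdisj : Rs ∩ Bs = ∅) {A A' : Set Pt} {u v u' v' : Pt}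
    (h : BlueData Rs Bs A u v ∨ RedData Rs Bs A u v)
    (h' : BlueData Rs Bs A' u' v' ∨ RedData Rs Bs A' u' v')
    (hne : A ≠ A') (hnp : ¬ PiercingInter A A') (hnc : ¬ CornerInter (Rs ∪ Bs) A A')
    (hint : (A ∩ A').Nonempty) : v = u' ∨ u = v' := by
  have hdisj' : ∀ w : Pt, w ∈ Rs → w ∈ Bs → False := by
    intro w h1 h2
    exact Set.eq_empty_iff_forall_notMem.1 hdisj w ⟨h1, h2⟩
  rcases h with ⟨hu, hv, huv, h1, h2, hA, hS⟩ | ⟨hu, hv, huv, h1, h2, hA, hS⟩ <;>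
    rcases h' with ⟨hu', hv', huv', h1', h2', hA', hS'⟩ | ⟨hu', hv', huv', h1', h2', hA', hS'⟩
  · -- blue / blue
    have hsub : A ∩ (Rs ∪ Bs) ⊆ {u, v} := by rw [hS]
    have hsub' : A' ∩ (Rs ∪ Bs) ⊆ {u', v'} := by rw [hS']
    by_cases e1 : v = u'
    · exact Or.inl e1
    by_cases e2 : u = v'
    · exact Or.inr e2
    exfalso
    by_cases e3 : u = u'
    · -- shared bottom-left corner
      have hvn : v ∉ A' := by
        intro hmem
        rcases hsub' ⟨hmem, Or.inr hv⟩ with hh | hh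
        · exact e1 hh
        · exact hne (by rw [hA, hA', ← e3, ← hh])
      have hv'n : v' ∉ A := by
        intro hmem
        rcases hsub ⟨hmem, Or.inr hv'⟩ with hh | hh
        · exact e2 hh.symm
        · exact hne (by rw [hA, hA', ← e3, hh])
      rw [hA'] at hvn; rw [hA] at hv'n
      have d1 := rect_cases hvn
      have d2 := rect_cases hv'n
      rw [← e3] at d1 h1' h2'
      have f1 : v'.1 < v.1 ∨ v'.2 < v.2 := by
        rcases d1 with k | k | k | k
        · exact absurd k (by linarith)
        · exact Or.inl k
        · exact absurd k (by linarith)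
        · exact Or.inr k
      have f2 : v.1 < v'.1 ∨ v.2 < v'.2 := by
        rcases d2 with k | k | k | k
        · exact absurd k (by linarith)
        · exact Or.inl k
        · exact absurd k (by linarith)
        · exact Or.inr k
      refine hnp ?_
      rw [hA, hA', ← e3]
      exact pierce_ll h1 h2 h1' h2' f1 f2
    by_cases e4 : v = v'
    · -- shared top-right corner
      have hun : u ∉ A' := by
        intro hmem
        rcases hsub' ⟨hmem, Or.inr hu⟩ with hh | hh
        · exact e3 hh
        · exact e2 hh
      have hu'n : u' ∉ A := by
        intro hmem
        rcases hsub ⟨hmem, Or.inr hu'⟩ with hh | hh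
        · exact e3 hh.symm
        · exact e1 hh.symm
      rw [hA'] at hun; rw [hA] at hu'n
      have d1 := rect_cases hun
      have d2 := rect_cases hu'n
      rw [← e4] at d1 h1' h2'
      have f1 : u.1 < u'.1 ∨ u.2 < u'.2 := by
        rcases d1 with k | k | k | k
        · exact Or.inl k
        · exact absurd k (by linarith)
        · exact Or.inr k
        · exact absurd k (by linarith)
      have f2 : u'.1 < u.1 ∨ u'.2 < u.2 := by
        rcases d2 with k | k | k | k
        · exact Or.inl k
        · exact absurd k (by linarith)
        · exact Or.inr k
        · exact absurd k (by linarith)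
      refine hnp ?_
      rw [hA, hA', ← e4]
      exact pierce_hh h1 h2 h1' h2' f1 f2
    · -- no shared point
      have hun : u ∉ A' := by
        intro hmem
        rcases hsub' ⟨hmem, Or.inr hu⟩ with hh | hh
        · exact e3 hh
        · exact e2 hh
      have hvn : v ∉ A' := by
        intro hmem
        rcases hsub' ⟨hmem, Or.inr hv⟩ with hh | hh
        · exact e1 hh
        · exact e4 hh
      have hu'n : u' ∉ A := by
        intro hmem
        rcases hsub ⟨hmem, Or.inr hu'⟩ with hh | hh
        · exact e3 hh.symm
        · exact e1 hh.symm
      have hv'n : v' ∉ A := by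
        intro hmem
        rcases hsub ⟨hmem, Or.inr hv'⟩ with hh | hh
        · exact e2 hh.symm
        · exact e4 hh.symm
      rw [hA'] at hun hvn; rw [hA] at hu'n hv'n
      rw [hA] at hsub; rw [hA'] at hsub'
      rw [hA, hA'] at hint hnp hnc
      exact noshare h1 h2 h1' h2' rfl rfl (Or.inl ⟨rfl, rfl⟩) rfl rfl (Or.inl ⟨rfl, rfl⟩)
        hsub hsub' hun hvn hu'n hv'n hint hnp hnc
  · -- blue / red : no shared points possible
    have hsub : A ∩ (Rs ∪ Bs) ⊆ {u, v} := by rw [hS]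
    have hsub' : A' ∩ (Rs ∪ Bs) ⊆ {u', v'} := by rw [hS']
    exfalso
    have hun : u ∉ A' := by
      intro hmem
      rcases hsub' ⟨hmem, Or.inr hu⟩ with hh | hh
      · exact hdisj' u (hh ▸ hu') hu
      · exact hdisj' u (hh ▸ hv') hu
    have hvn : v ∉ A' := by
      intro hmem
      rcases hsub' ⟨hmem, Or.inr hv⟩ with hh | hh
      · exact hdisj' v (hh ▸ hu') hv
      · exact hdisj' v (hh ▸ hv') hv
    have hu'n : u' ∉ A := by
      intro hmem
      rcases hsub ⟨hmem, Or.inl hu'⟩ with hh | hh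
      · exact hdisj' u' hu' (hh ▸ hu)
      · exact hdisj' u' hu' (hh ▸ hv)
    have hv'n : v' ∉ A := by
      intro hmem
      rcases hsub ⟨hmem, Or.inl hv'⟩ with hh | hh
      · exact hdisj' v' hv' (hh ▸ hu)
      · exact hdisj' v' hv' (hh ▸ hv)
    rw [hA'] at hun hvn; rw [hA] at hu'n hv'n
    rw [hA] at hsub; rw [hA'] at hsub'
    rw [hA, hA'] at hint hnp hnc
    exact noshare h1 h2 h1' h2' rfl rfl (Or.inl ⟨rfl, rfl⟩) rfl rfl (Or.inr ⟨rfl, rfl⟩)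
      hsub hsub' hun hvn hu'n hv'n hint hnp hnc
  · -- red / blue
    have hsub : A ∩ (Rs ∪ Bs) ⊆ {u, v} := by rw [hS]
    have hsub' : A' ∩ (Rs ∪ Bs) ⊆ {u', v'} := by rw [hS']
    exfalso
    have hun : u ∉ A' := by
      intro hmem
      rcases hsub' ⟨hmem, Or.inl hu⟩ with hh | hh
      · exact hdisj' u hu (hh ▸ hu')
      · exact hdisj' u hu (hh ▸ hv')
    have hvn : v ∉ A' := by
      intro hmem
      rcases hsub' ⟨hmem, Or.inl hv⟩ with hh | hh
      · exact hdisj' v hv (hh ▸ hu')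
      · exact hdisj' v hv (hh ▸ hv')
    have hu'n : u' ∉ A := by
      intro hmem
      rcases hsub ⟨hmem, Or.inr hu'⟩ with hh | hh
      · exact hdisj' u' (hh ▸ hu) hu'
      · exact hdisj' u' (hh ▸ hv) hu'
    have hv'n : v' ∉ A := by
      intro hmem
      rcases hsub ⟨hmem, Or.inr hv'⟩ with hh | hh
      · exact hdisj' v' (hh ▸ hu) hv'
      · exact hdisj' v' (hh ▸ hv) hv'
    rw [hA'] at hun hvn; rw [hA] at hu'n hv'n
    rw [hA] at hsub; rw [hA'] at hsub'
    rw [hA, hA'] at hint hnp hnc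
    exact noshare h1 h2 h1' h2' rfl rfl (Or.inr ⟨rfl, rfl⟩) rfl rfl (Or.inl ⟨rfl, rfl⟩)
      hsub hsub' hun hvn hu'n hv'n hint hnp hnc
  · -- red / red
    have hsub : A ∩ (Rs ∪ Bs) ⊆ {u, v} := by rw [hS]
    have hsub' : A' ∩ (Rs ∪ Bs) ⊆ {u', v'} := by rw [hS']
    by_cases e1 : v = u'
    · exact Or.inl e1
    by_cases e2 : u = v'
    · exact Or.inr e2
    exfalso
    by_cases e3 : u = u'
    · -- shared top-left corner
      have hvn : v ∉ A' := by
        intro hmem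
        rcases hsub' ⟨hmem, Or.inl hv⟩ with hh | hh
        · exact e1 hh
        · exact hne (by rw [hA, hA', ← e3, ← hh])
      have hv'n : v' ∉ A := by
        intro hmem
        rcases hsub ⟨hmem, Or.inl hv'⟩ with hh | hh
        · exact e2 hh.symm
        · exact hne (by rw [hA, hA', ← e3, hh])
      rw [hA'] at hvn; rw [hA] at hv'n
      have d1 := rect_cases hvn
      have d2 := rect_cases hv'n
      rw [← e3] at d1 h1' h2'
      have f1 : v'.1 < v.1 ∨ v.2 < v'.2 := by
        rcases d1 with k | k | k | k
        · exact absurd k (by linarith)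
        · exact Or.inl k
        · exact Or.inr k
        · exact absurd k (by linarith)
      have f2 : v.1 < v'.1 ∨ v'.2 < v.2 := by
        rcases d2 with k | k | k | k
        · exact absurd k (by linarith)
        · exact Or.inl k
        · exact Or.inr k
        · exact absurd k (by linarith)
      refine hnp ?_
      rw [hA, hA', ← e3]
      exact pierce_lh h1 h2 h1' h2' f1 f2
    by_cases e4 : v = v'
    · -- shared bottom-right corner
      have hun : u ∉ A' := by
        intro hmem
        rcases hsub' ⟨hmem, Or.inl hu⟩ with hh | hh
        · exact e3 hh
        · exact e2 hh
      have hu'n : u' ∉ A := by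
        intro hmem
        rcases hsub ⟨hmem, Or.inl hu'⟩ with hh | hh
        · exact e3 hh.symm
        · exact e1 hh.symm
      rw [hA'] at hun; rw [hA] at hu'n
      have d1 := rect_cases hun
      have d2 := rect_cases hu'n
      rw [← e4] at d1 h1' h2'
      have f1 : u.1 < u'.1 ∨ u'.2 < u.2 := by
        rcases d1 with k | k | k | k
        · exact Or.inl k
        · exact absurd k (by linarith)
        · exact absurd k (by linarith)
        · exact Or.inr k
      have f2 : u'.1 < u.1 ∨ u.2 < u'.2 := by
        rcases d2 with k | k | k | k
        · exact Or.inl k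
        · exact absurd k (by linarith)
        · exact absurd k (by linarith)
        · exact Or.inr k
      refine hnp ?_
      rw [hA, hA', ← e4]
      exact pierce_hl h1 h2 h1' h2' f1 f2
    · -- no shared point
      have hun : u ∉ A' := by
        intro hmem
        rcases hsub' ⟨hmem, Or.inl hu⟩ with hh | hh
        · exact e3 hh
        · exact e2 hh
      have hvn : v ∉ A' := by
        intro hmem
        rcases hsub' ⟨hmem, Or.inl hv⟩ with hh | hh
        · exact e1 hh
        · exact e4 hh
      have hu'n : u' ∉ A := by
        intro hmem
        rcases hsub ⟨hmem, Or.inl hu'⟩ with hh | hh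
        · exact e3 hh.symm
        · exact e1 hh.symm
      have hv'n : v' ∉ A := by
        intro hmem
        rcases hsub ⟨hmem, Or.inl hv'⟩ with hh | hh
        · exact e2 hh.symm
        · exact e4 hh.symm
      rw [hA'] at hun hvn; rw [hA] at hu'n hv'n
      rw [hA] at hsub; rw [hA'] at hsub'
      rw [hA, hA'] at hint hnp hnc
      exact noshare h1 h2 h1' h2' rfl rfl (Or.inr ⟨rfl, rfl⟩) rfl rfl (Or.inr ⟨rfl, rfl⟩)
        hsub hsub' hun hvn hu'n hv'n hint hnp hnc
lemma blue_strict {Rs Bs : Set Pt} {A : Set Pt} {u v : Pt} (h : BlueData Rs Bs A u v) :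
    u.1 + u.2 < v.1 + v.2 := by
  obtain ⟨-, -, huv, h1, h2, -, -⟩ := h
  rcases lt_or_eq_of_le h1 with k | k
  · linarith
  · rcases lt_or_eq_of_le h2 with k2 | k2
    · linarith
    · exact absurd (Prod.ext_iff.2 ⟨k, k2⟩) huv

lemma red_strict {Rs Bs : Set Pt} {A : Set Pt} {u v : Pt} (h : RedData Rs Bs A u v) :
    u.1 - u.2 < v.1 - v.2 := by
  obtain ⟨-, -, huv, h1, h2, -, -⟩ := h
  rcases lt_or_eq_of_le h1 with k | k
  · linarith
  · rcases lt_or_eq_of_le h2 with k2 | k2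
    · linarith
    · exact absurd (Prod.ext_iff.2 ⟨k, k2.symm⟩) huv

lemma blue_mem_u {Rs Bs : Set Pt} {A : Set Pt} {u v : Pt} (h : BlueData Rs Bs A u v) :
    u ∈ A := by
  obtain ⟨-, -, -, h1, h2, hA, -⟩ := h
  rw [hA]; exact mem_Rect.2 ⟨⟨le_rfl, h1⟩, ⟨le_rfl, h2⟩⟩

lemma blue_same_u {Rs Bs : Set Pt} {A A' : Set Pt} {u v v' : Pt}
    (h : BlueData Rs Bs A u v) (h' : BlueData Rs Bs A' u v') (hne : A ≠ A') :
    PiercingInter A A' := by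
  obtain ⟨hu, hv, huv, h1, h2, hA, hS⟩ := h
  obtain ⟨hu', hv', huv', h1', h2', hA', hS'⟩ := h'
  have hsub : A ∩ (Rs ∪ Bs) ⊆ {u, v} := by rw [hS]
  have hsub' : A' ∩ (Rs ∪ Bs) ⊆ {u, v'} := by rw [hS']
  have hvn : v ∉ A' := by
    intro hmem
    rcases hsub' ⟨hmem, Or.inr hv⟩ with hh | hh
    · exact huv hh.symm
    · exact hne (by rw [hA, hA', ← hh])
  have hv'n : v' ∉ A := by
    intro hmem
    rcases hsub ⟨hmem, Or.inr hv'⟩ with hh | hh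
    · exact huv' hh.symm
    · exact hne (by rw [hA, hA', hh])
  rw [hA'] at hvn; rw [hA] at hv'n
  have d1 := rect_cases hvn
  have d2 := rect_cases hv'n
  have f1 : v'.1 < v.1 ∨ v'.2 < v.2 := by
    rcases d1 with k | k | k | k
    · exact absurd k (by linarith)
    · exact Or.inl k
    · exact absurd k (by linarith)
    · exact Or.inr k
  have f2 : v.1 < v'.1 ∨ v.2 < v'.2 := by
    rcases d2 with k | k | k | k
    · exact absurd k (by linarith)
    · exact Or.inl k
    · exact absurd k (by linarith)
    · exact Or.inr k
  rw [hA, hA']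
  exact pierce_ll h1 h2 h1' h2' f1 f2

lemma red_same_u {Rs Bs : Set Pt} {A A' : Set Pt} {u v v' : Pt}
    (h : RedData Rs Bs A u v) (h' : RedData Rs Bs A' u v') (hne : A ≠ A') :
    PiercingInter A A' := by
  obtain ⟨hu, hv, huv, h1, h2, hA, hS⟩ := h
  obtain ⟨hu', hv', huv', h1', h2', hA', hS'⟩ := h'
  have hsub : A ∩ (Rs ∪ Bs) ⊆ {u, v} := by rw [hS]
  have hsub' : A' ∩ (Rs ∪ Bs) ⊆ {u, v'} := by rw [hS']
  have hvn : v ∉ A' := by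
    intro hmem
    rcases hsub' ⟨hmem, Or.inl hv⟩ with hh | hh
    · exact huv hh.symm
    · exact hne (by rw [hA, hA', ← hh])
  have hv'n : v' ∉ A := by
    intro hmem
    rcases hsub ⟨hmem, Or.inl hv'⟩ with hh | hh
    · exact huv' hh.symm
    · exact hne (by rw [hA, hA', hh])
  rw [hA'] at hvn; rw [hA] at hv'n
  have d1 := rect_cases hvn
  have d2 := rect_cases hv'n
  have f1 : v'.1 < v.1 ∨ v.2 < v'.2 := by
    rcases d1 with k | k | k | k
    · exact absurd k (by linarith)
    · exact Or.inl k
    · exact Or.inr k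
    · exact absurd k (by linarith)
  have f2 : v.1 < v'.1 ∨ v'.2 < v.2 := by
    rcases d2 with k | k | k | k
    · exact absurd k (by linarith)
    · exact Or.inl k
    · exact Or.inr k
    · exact absurd k (by linarith)
  rw [hA, hA']
  exact pierce_lh h1 h2 h1' h2' f1 f2
lemma sparse_indep (f : Set Pt → ℝ) :
    ∀ n : ℕ, ∀ G : Set (Set Pt), G.Finite → G.ncard ≤ n →
    (∀ A ∈ G, ∀ B ∈ G, A ≠ B → (A ∩ B).Nonempty → f A ≠ f B) →
    (∀ A ∈ G, ∀ B ∈ G, ∀ C ∈ G, A ≠ B → A ≠ C → (A ∩ B).Nonempty → (A ∩ C).Nonempty →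
      f A < f B → f A < f C → B = C) →
    ∃ I ⊆ G, (I.Pairwise fun X Y => X ∩ Y = ∅) ∧ G.ncard ≤ 2 * I.ncard := by
  intro n
  induction n with
  | zero =>
    intro G hfin hcard _ _
    have : G = ∅ := (Set.ncard_eq_zero hfin).1 (Nat.le_zero.1 hcard)
    exact ⟨∅, Set.empty_subset _, Set.pairwise_empty _, by simp [this]⟩
  | succ n ih =>
    intro G hfin hcard hneq hun
    rcases G.eq_empty_or_nonempty with rfl | hGne
    · exact ⟨∅, Set.empty_subset _, Set.pairwise_empty _, by simp⟩
    obtain ⟨A, hA, hmin⟩ := G.exists_min_image f hfin hGne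
    by_cases hnb : ∃ B ∈ G, B ≠ A ∧ (A ∩ B).Nonempty
    · obtain ⟨Bv, hB, hBA, hABn⟩ := hnb
      set G' := G \ {A, Bv} with hG'
      have hABG : ({A, Bv} : Set (Set Pt)) ⊆ G := by
        intro x hx; rcases hx with rfl | rfl
        · exact hA
        · exact hB
      have hfin' : G'.Finite := hfin.diff
      have hsub' : G' ⊆ G := Set.diff_subset
      have hcard2 : ({A, Bv} : Set (Set Pt)).ncard = 2 := Set.ncard_pair (Ne.symm hBA)
      have hcardG' : G'.ncard = G.ncard - 2 := by
        rw [hG', Set.ncard_diff hABG, hcard2]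
      have hGge : 2 ≤ G.ncard := by
        have := Set.ncard_le_ncard hABG hfin
        omega
      have hcard' : G'.ncard ≤ n := by omega
      obtain ⟨I', hI'sub, hI'p, hI'card⟩ := ih G' hfin' hcard'
        (fun X hX Y hY => hneq X (hsub' hX) Y (hsub' hY))
        (fun X hX Y hY Z hZ => hun X (hsub' hX) Y (hsub' hY) Z (hsub' hZ))
      have hAnI' : A ∉ I' := fun hmem => (hI'sub hmem).2 (Or.inl rfl)
      have hAdisj : ∀ C ∈ I', A ∩ C = ∅ := by
        intro C hC
        by_contra hcon
        have hCne : (A ∩ C).Nonempty := Set.nonempty_iff_ne_empty.2 hcon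
        have hCG : C ∈ G := hsub' (hI'sub hC)
        have hCA : C ≠ A := fun hEq => (hI'sub hC).2 (Or.inl hEq)
        have hCB : C ≠ Bv := fun hEq => (hI'sub hC).2 (Or.inr hEq)
        have hfAB : f A < f Bv := by
          rcases lt_or_eq_of_le (hmin Bv hB) with k | k
          · exact k
          · exact absurd k (hneq A hA Bv hB (Ne.symm hBA) hABn)
        have hfAC : f A < f C := by
          rcases lt_or_eq_of_le (hmin C hCG) with k | k
          · exact k
          · exact absurd k (hneq A hA C hCG (Ne.symm hCA) hCne)
        exact hCB (hun A hA Bv hB C hCG (Ne.symm hBA) (Ne.symm hCA) hABn hCne hfAB hfAC).symm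
      refine ⟨insert A I', ?_, ?_, ?_⟩
      · exact Set.insert_subset hA (hI'sub.trans hsub')
      · rw [Set.pairwise_insert]
        refine ⟨hI'p, fun C hC _ => ⟨hAdisj C hC, by rw [Set.inter_comm]; exact hAdisj C hC⟩⟩
      · have hIfin : I'.Finite := hfin'.subset hI'sub
        rw [Set.ncard_insert_of_notMem hAnI' hIfin]
        omega
    · push_neg at hnb
      set G' := G \ {A} with hG'
      have hAG : ({A} : Set (Set Pt)) ⊆ G := Set.singleton_subset_iff.2 hA
      have hfin' : G'.Finite := hfin.diff
      have hsub' : G' ⊆ G := Set.diff_subset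
      have hcardG' : G'.ncard = G.ncard - 1 := by
        rw [hG', Set.ncard_diff hAG, Set.ncard_singleton]
      have hGge : 1 ≤ G.ncard := (Set.ncard_pos hfin).2 hGne
      have hcard' : G'.ncard ≤ n := by omega
      obtain ⟨I', hI'sub, hI'p, hI'card⟩ := ih G' hfin' hcard'
        (fun X hX Y hY => hneq X (hsub' hX) Y (hsub' hY))
        (fun X hX Y hY Z hZ => hun X (hsub' hX) Y (hsub' hY) Z (hsub' hZ))
      have hAnI' : A ∉ I' := fun hmem => (hI'sub hmem).2 rfl
      have hAdisj : ∀ C ∈ I', A ∩ C = ∅ := fun C hC =>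
        hnb C (hsub' (hI'sub hC)) (fun hEq => (hI'sub hC).2 hEq)
      refine ⟨insert A I', ?_, ?_, ?_⟩
      · exact Set.insert_subset hA (hI'sub.trans hsub')
      · rw [Set.pairwise_insert]
        refine ⟨hI'p, fun C hC _ => ⟨hAdisj C hC, by rw [Set.inter_comm]; exact hAdisj C hC⟩⟩
      · have hIfin : I'.Finite := hfin'.subset hI'sub
        rw [Set.ncard_insert_of_notMem hAnI' hIfin]
        omega
/-- If no two elements of a finite `H ⊆ 𝓡₁` have a piercing or
a corner intersection, then `H` has a subfamily `I` of pairwise-disjoint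
rectangles with `2|I| ≥ |H|`. -/
theorem stmt8 (R B : Set Pt) (hfin : (R ∪ B).Finite) (hdisj : R ∩ B = ∅)
    (H : Set (Set Pt)) (hHfin : H.Finite) (hH : H ⊆ Fam1 R B)
    (hnoadj : H.Pairwise fun A A' =>
      ¬ PiercingInter A A' ∧ ¬ CornerInter (R ∪ B) A A') :
    ∃ I ⊆ H, (I.Pairwise fun A A' => A ∩ A' = ∅) ∧ H.ncard ≤ 2 * I.ncard := by
  classical
  have hdisj' : ∀ w : Pt, w ∈ R → w ∈ B → False := fun w h1 h2 =>
    Set.eq_empty_iff_forall_notMem.1 hdisj w ⟨h1, h2⟩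
  have hdata : ∀ A ∈ H, ∃ u v, BlueData R B A u v ∨ RedData R B A u v := by
    intro A hA
    rcases fam1_data (hH hA) with ⟨u, v, h⟩ | ⟨u, v, h⟩
    exacts [⟨u, v, Or.inl h⟩, ⟨u, v, Or.inr h⟩]
  choose! uu vv hd using hdata
  set f : Set Pt → ℝ := fun A =>
    if (A ∩ B).Nonempty then (uu A).1 + (uu A).2 + ((vv A).1 + (vv A).2)
    else (uu A).1 - (uu A).2 + ((vv A).1 - (vv A).2) with hf
  have hfblue : ∀ A, BlueData R B A (uu A) (vv A) →
      f A = (uu A).1 + (uu A).2 + ((vv A).1 + (vv A).2) := by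
    intro A hb
    have hc : (A ∩ B).Nonempty := ⟨uu A, blue_mem_u hb, hb.1⟩
    rw [hf]; simp only [if_pos hc]
  have hfred : ∀ A, RedData R B A (uu A) (vv A) →
      f A = (uu A).1 - (uu A).2 + ((vv A).1 - (vv A).2) := by
    intro A hr
    have hc : ¬ (A ∩ B).Nonempty := by
      rintro ⟨z, hzA, hzB⟩
      have hz : z ∈ A ∩ (R ∪ B) := ⟨hzA, Or.inr hzB⟩
      rw [hr.2.2.2.2.2.2] at hz
      rcases hz with rfl | rfl
      · exact hdisj' _ hr.1 hzB
      · exact hdisj' _ hr.2.1 hzB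
    rw [hf]; simp only [if_neg hc]
  have key : ∀ A ∈ H, ∀ A' ∈ H, A ≠ A' → (A ∩ A').Nonempty →
      (vv A = uu A' ∧ f A < f A') ∨ (uu A = vv A' ∧ f A' < f A) := by
    intro A hA A' hA' hne hint
    have hadj := hnoadj hA hA' hne
    have hcl := classify hdisj (hd A hA) (hd A' hA') hne hadj.1 hadj.2 hint
    rcases hcl with hvu | huv
    · refine Or.inl ⟨hvu, ?_⟩
      rcases hd A hA with hb | hr <;> rcases hd A' hA' with hb' | hr'
      · have s1 := blue_strict hb
        have s2 := blue_strict hb'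
        have e : (vv A).1 + (vv A).2 = (uu A').1 + (uu A').2 := by rw [hvu]
        rw [hfblue A hb, hfblue A' hb']
        linarith
      · exact absurd (hvu ▸ hb.2.1) (fun hh => hdisj' _ hr'.1 hh)
      · exact absurd (hvu ▸ hr.2.1) (fun hh => hdisj' _ hh hb'.1)
      · have s1 := red_strict hr
        have s2 := red_strict hr'
        have e : (vv A).1 - (vv A).2 = (uu A').1 - (uu A').2 := by rw [hvu]
        rw [hfred A hr, hfred A' hr']
        linarith
    · refine Or.inr ⟨huv, ?_⟩
      rcases hd A hA with hb | hr <;> rcases hd A' hA' with hb' | hr'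
      · have s1 := blue_strict hb
        have s2 := blue_strict hb'
        have e : (uu A).1 + (uu A).2 = (vv A').1 + (vv A').2 := by rw [huv]
        rw [hfblue A hb, hfblue A' hb']
        linarith
      · exact absurd (huv ▸ hb.1) (fun hh => hdisj' _ hr'.2.1 hh)
      · exact absurd (huv ▸ hr.1) (fun hh => hdisj' _ hh hb'.2.1)
      · have s1 := red_strict hr
        have s2 := red_strict hr'
        have e : (uu A).1 - (uu A).2 = (vv A').1 - (vv A').2 := by rw [huv]
        rw [hfred A hr, hfred A' hr']
        linarith
  have hneq : ∀ A ∈ H, ∀ Bv ∈ H, A ≠ Bv → (A ∩ Bv).Nonempty → f A ≠ f Bv := by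
    intro A hA Bv hB hne hint
    rcases key A hA Bv hB hne hint with ⟨_, hlt⟩ | ⟨_, hlt⟩
    · exact ne_of_lt hlt
    · exact (ne_of_lt hlt).symm
  have hun : ∀ A ∈ H, ∀ Bv ∈ H, ∀ C ∈ H, A ≠ Bv → A ≠ C → (A ∩ Bv).Nonempty →
      (A ∩ C).Nonempty → f A < f Bv → f A < f C → Bv = C := by
    intro A hA Bv hB C hC hAB hAC hiB hiC hfB hfC
    by_contra hBC
    have k1 := key A hA Bv hB hAB hiB
    have k2 := key A hA C hC hAC hiC
    rcases k1 with ⟨e1, _⟩ | ⟨_, hlt⟩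
    swap
    · linarith
    rcases k2 with ⟨e2, _⟩ | ⟨_, hlt⟩
    swap
    · linarith
    have he : uu Bv = uu C := e1.symm.trans e2
    have hadjBC := hnoadj hB hC hBC
    rcases hd Bv hB with hb | hr <;> rcases hd C hC with hb' | hr'
    · rw [← he] at hb'
      exact hadjBC.1 (blue_same_u hb hb' hBC)
    · exact hdisj' _ (he ▸ hr'.1) hb.1
    · exact hdisj' _ hr.1 (he ▸ hb'.1)
    · rw [← he] at hr'
      exact hadjBC.1 (red_same_u hr hr' hBC)
  exact sparse_indep f H.ncard H hHfin le_rfl hneq hun
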